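/- Let K[x_1,x_2,x_3,x_4] with the ideal J_3 = ⟨x_3², x_4², x_2^m x_4, x_1^{m+2} x_3, x_2^{2m+1}⟩ for an integer m ≥ 1. Then the numerator of the Hilbert series of K[x_1,...,x_4]/J_3 (with respect to the standard grading, written over (1−t)^4) equals (1−t)^3 (1 + t − t^{m+3})(1 + 2t + ⋯ + 2t^m + t^{m+1} + ⋯ + t^{2m}). -/

import Mathlib

open MvPolynomial PowerSeries

/-- The Hilbert function of the quotient by a monomial ideal: the number of monomials of
total degree `n` not lying in the ideal. -/
noncomputable def monomialHF {K : Type*} [Field K] {d : ℕ}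
    (I : Ideal (MvPolynomial (Fin d) K)) (n : ℕ) : ℕ :=
  {u : Fin d → ℕ | (∑ i, u i) = n ∧
    (monomial (Finsupp.equivFunOnFinite.symm u) (1 : K)) ∉ I}.ncard

namespace Stmt9Aux

/-- Number of pairs `(a,c)` with `a+c=j`, `c ≤ 1`, `(c = 0 ∨ a < m+2)`. -/
def fz (m j : ℕ) : ℤ := if j = 0 then 1 else if j ≤ m + 2 then 2 else 1

/-- Number of pairs `(b,d)` with `b+d=k`, `d ≤ 1`, `(d = 0 ∨ b < m)`, `b ≤ 2m`. -/
def gz (m k : ℕ) : ℤ := if k = 0 then 1 else if k ≤ m then 2 else if k ≤ 2 * m then 1 else 0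

def A (m j : ℕ) : Finset (ℕ × ℕ) :=
  (Finset.HasAntidiagonal.antidiagonal j).filter fun p => p.2 ≤ 1 ∧ (p.1 < m + 2 ∨ p.2 = 0)

def B (m k : ℕ) : Finset (ℕ × ℕ) :=
  (Finset.HasAntidiagonal.antidiagonal k).filter fun p => p.2 ≤ 1 ∧ (p.1 < m ∨ p.2 = 0) ∧ p.1 ≤ 2 * m

lemma A_eq (m j : ℕ) : A m j =
    if j = 0 then {(0, 0)} else if j ≤ m + 2 then {(j, 0), (j - 1, 1)} else {(j, 0)} := by
  ext ⟨a, c⟩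
  simp only [A, Finset.mem_filter, Finset.HasAntidiagonal.mem_antidiagonal]
  split_ifs with h1 h2 <;>
    simp only [Finset.mem_insert, Finset.mem_singleton, Prod.mk.injEq] <;> omega

lemma card_A (m j : ℕ) : ((A m j).card : ℤ) = fz m j := by
  rw [A_eq]
  unfold fz
  split_ifs with h1 h2
  · simp
  · rw [Finset.card_insert_of_notMem (by simp), Finset.card_singleton]; norm_num
  · simp

lemma B_eq (m k : ℕ) : B m k =
    if k = 0 then {(0, 0)} else if k ≤ m then {(k, 0), (k - 1, 1)}
      else if k ≤ 2 * m then {(k, 0)} else ∅ := by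
  ext ⟨b, d⟩
  simp only [B, Finset.mem_filter, Finset.HasAntidiagonal.mem_antidiagonal]
  split_ifs with h1 h2 h3 <;>
    simp only [Finset.mem_insert, Finset.mem_singleton, Finset.notMem_empty,
      Prod.mk.injEq, iff_false, not_and, not_or] <;> omega

lemma card_B (m k : ℕ) : ((B m k).card : ℤ) = gz m k := by
  rw [B_eq]
  unfold gz
  split_ifs with h1 h2 h3
  · simp
  · rw [Finset.card_insert_of_notMem (by simp), Finset.card_singleton]; norm_num
  · simp
  · simp

def Ψ : (ℕ × ℕ) × (ℕ × ℕ) → (Fin 4 → ℕ) := fun p => ![p.1.1, p.2.1, p.1.2, p.2.2]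

lemma Ψ_inj : Function.Injective Ψ := by
  rintro ⟨⟨a, c⟩, ⟨b, d⟩⟩ ⟨⟨a', c'⟩, ⟨b', d'⟩⟩ h
  have h0 := congrFun h 0
  have h1 := congrFun h 1
  have h2 := congrFun h 2
  have h3 := congrFun h 3
  simp only [Ψ, Matrix.cons_val_zero, Matrix.cons_val_one, Matrix.head_cons,
    Matrix.cons_val_two, Matrix.tail_cons, Matrix.cons_val_three] at h0 h1 h2 h3
  simp [h0, h1, h2, h3]

def T (m n : ℕ) : Finset ((ℕ × ℕ) × (ℕ × ℕ)) :=
  (Finset.HasAntidiagonal.antidiagonal n).biUnion fun jk => (A m jk.1) ×ˢ (B m jk.2)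

lemma card_T (m n : ℕ) :
    ((T m n).card : ℤ) = ∑ jk ∈ Finset.HasAntidiagonal.antidiagonal n, fz m jk.1 * gz m jk.2 := by
  rw [T, Finset.card_biUnion]
  · push_cast
    refine Finset.sum_congr rfl fun jk _ => ?_
    rw [Finset.card_product]
    push_cast
    rw [card_A, card_B]
  · intro x hx y hy hxy
    rw [Function.onFun, Finset.disjoint_left]
    rintro ⟨p, q⟩ hp hq
    simp only [Finset.mem_product, A, B, Finset.mem_filter, Finset.HasAntidiagonal.mem_antidiagonal] at hp hq
    simp only [Finset.mem_coe, Finset.HasAntidiagonal.mem_antidiagonal] at hx hy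
    exact hxy (by rw [Prod.ext_iff]; omega)

lemma add_single_le {i j : Fin 4} (h : i ≠ j) (a b : ℕ) (v : Fin 4 →₀ ℕ) :
    Finsupp.single i a + Finsupp.single j b ≤ v ↔ a ≤ v i ∧ b ≤ v j := by
  rw [Finsupp.le_def]
  constructor
  · intro hle
    constructor
    · have := hle i
      simpa [Finsupp.single_apply, h.symm] using this
    · have := hle j
      simpa [Finsupp.single_apply, h] using this
  · rintro ⟨h1, h2⟩ x
    rcases eq_or_ne x i with rfl | hxi
    · simpa [Finsupp.single_apply, h.symm] using h1
    rcases eq_or_ne x j with rfl | hxj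
    · simpa [Finsupp.single_apply, h] using h2
    · simp [Finsupp.single_apply, Ne.symm hxi, Ne.symm hxj]

lemma mem_span_iff {K : Type*} [Field K] (m : ℕ) (u : Fin 4 → ℕ) :
    (monomial (Finsupp.equivFunOnFinite.symm u) (1 : K)) ∈ Ideal.span
        ({MvPolynomial.X 2 ^ 2, MvPolynomial.X 3 ^ 2, MvPolynomial.X 1 ^ m * MvPolynomial.X 3,
          MvPolynomial.X 0 ^ (m + 2) * MvPolynomial.X 2, MvPolynomial.X 1 ^ (2 * m + 1)} :
          Set (MvPolynomial (Fin 4) K)) ↔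
      2 ≤ u 2 ∨ 2 ≤ u 3 ∨ (m ≤ u 1 ∧ 1 ≤ u 3) ∨ (m + 2 ≤ u 0 ∧ 1 ≤ u 2) ∨ 2 * m + 1 ≤ u 1 := by
  classical
  have hS : ({MvPolynomial.X 2 ^ 2, MvPolynomial.X 3 ^ 2, MvPolynomial.X 1 ^ m * MvPolynomial.X 3,
          MvPolynomial.X 0 ^ (m + 2) * MvPolynomial.X 2, MvPolynomial.X 1 ^ (2 * m + 1)} :
          Set (MvPolynomial (Fin 4) K)) =
      (fun s => MvPolynomial.monomial s (1 : K)) ''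
        ({Finsupp.single 2 2, Finsupp.single 3 2, Finsupp.single 1 m + Finsupp.single 3 1,
          Finsupp.single 0 (m + 2) + Finsupp.single 2 1,
          Finsupp.single 1 (2 * m + 1)} : Set (Fin 4 →₀ ℕ)) := by
    rw [Set.image_insert_eq, Set.image_insert_eq, Set.image_insert_eq, Set.image_insert_eq,
      Set.image_singleton, show (MvPolynomial.X 3 : MvPolynomial (Fin 4) K) = MvPolynomial.X 3 ^ 1
        from (pow_one _).symm,
      show (MvPolynomial.X 2 : MvPolynomial (Fin 4) K) = MvPolynomial.X 2 ^ 1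
        from (pow_one _).symm]
    simp only [X_pow_eq_monomial, monomial_mul, mul_one, MvPolynomial.monomial_pow,
      Finsupp.smul_single, smul_eq_mul, mul_one, one_pow, Nat.mul_one]
  rw [hS, mem_ideal_span_monomial_image]
  rw [support_monomial, if_neg one_ne_zero]
  simp only [Finset.mem_singleton, forall_eq, Set.mem_insert_iff, Set.mem_singleton_iff,
    exists_eq_or_imp, exists_eq_left]
  have happ : ∀ i : Fin 4, (Finsupp.equivFunOnFinite.symm u) i = u i := fun i => rfl
  rw [Finsupp.single_le_iff, Finsupp.single_le_iff, Finsupp.single_le_iff,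
    add_single_le (by decide), add_single_le (by decide)]
  simp only [happ]

lemma set_eq {K : Type*} [Field K] (m n : ℕ) :
    {u : Fin 4 → ℕ | (∑ i, u i) = n ∧
      (monomial (Finsupp.equivFunOnFinite.symm u) (1 : K)) ∉ Ideal.span
        ({MvPolynomial.X 2 ^ 2, MvPolynomial.X 3 ^ 2, MvPolynomial.X 1 ^ m * MvPolynomial.X 3,
          MvPolynomial.X 0 ^ (m + 2) * MvPolynomial.X 2, MvPolynomial.X 1 ^ (2 * m + 1)} :
          Set (MvPolynomial (Fin 4) K))} = ↑((T m n).image Ψ) := by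
  ext u
  simp only [Set.mem_setOf_eq, mem_span_iff, Finset.coe_image, Set.mem_image, Finset.mem_coe,
    T, Finset.mem_biUnion, Finset.HasAntidiagonal.mem_antidiagonal, Finset.mem_product, A, B,
    Finset.mem_filter]
  constructor
  · rintro ⟨hsum, hnot⟩
    push_neg at hnot
    rw [Fin.sum_univ_four] at hsum
    refine ⟨((u 0, u 2), (u 1, u 3)), ⟨(u 0 + u 2, u 1 + u 3), by dsimp only; omega,
      ⟨by dsimp only; omega, by dsimp only; omega⟩⟩, ?_⟩
    funext i
    fin_cases i <;> rfl
  · rintro ⟨⟨⟨a, c⟩, ⟨b, d⟩⟩, ⟨⟨j, k⟩, hjk, ⟨hA1, hA2⟩, hB1, hB2⟩, rfl⟩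
    simp only [Finset.HasAntidiagonal.mem_antidiagonal] at hA1 hB1
    dsimp only at hjk hA2 hB2
    have h0 : Ψ ((a, c), (b, d)) 0 = a := rfl
    have h1 : Ψ ((a, c), (b, d)) 1 = b := rfl
    have h2 : Ψ ((a, c), (b, d)) 2 = c := rfl
    have h3 : Ψ ((a, c), (b, d)) 3 = d := rfl
    rw [Fin.sum_univ_four, h0, h1, h2, h3]
    omega

lemma HF_eq {K : Type*} [Field K] (m n : ℕ) :
    ((monomialHF (Ideal.span
        ({MvPolynomial.X 2 ^ 2, MvPolynomial.X 3 ^ 2, MvPolynomial.X 1 ^ m * MvPolynomial.X 3,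
          MvPolynomial.X 0 ^ (m + 2) * MvPolynomial.X 2, MvPolynomial.X 1 ^ (2 * m + 1)} :
          Set (MvPolynomial (Fin 4) K))) n : ℕ) : ℤ) =
      ∑ jk ∈ Finset.HasAntidiagonal.antidiagonal n, fz m jk.1 * gz m jk.2 := by
  rw [monomialHF, set_eq, Set.ncard_coe_finset, Finset.card_image_of_injective _ Ψ_inj, card_T]

lemma mk_fz_mul (m : ℕ) :
    (PowerSeries.mk fun n => fz m n) * (1 - PowerSeries.X) =
      1 + PowerSeries.X - PowerSeries.X ^ (m + 3) := by
  ext n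
  rw [mul_sub, mul_one, map_sub, map_sub, map_add]
  cases n with
  | zero =>
    rw [PowerSeries.coeff_zero_mul_X]
    simp [fz, PowerSeries.coeff_X_pow]
  | succ n =>
    rw [PowerSeries.coeff_succ_mul_X, PowerSeries.coeff_mk, PowerSeries.coeff_mk,
      PowerSeries.coeff_one, PowerSeries.coeff_X, PowerSeries.coeff_X_pow]
    unfold fz
    split_ifs <;> first | omega | exact absurd rfl (by assumption) | exact (‹False›).elim

lemma mk_gz (m : ℕ) :
    (PowerSeries.mk fun n => gz m n) =
      ∑ k ∈ Finset.range (2 * m + 1),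
        (if k = 0 then 1 else if k ≤ m then 2 else (1 : ℤ)) • PowerSeries.X ^ k := by
  ext n
  rw [PowerSeries.coeff_mk, map_sum]
  have hs : ∀ (c : ℤ) (x : ℕ), PowerSeries.coeff n (c • (PowerSeries.X : PowerSeries ℤ) ^ x) =
      c • PowerSeries.coeff n (PowerSeries.X ^ x) := fun c x => map_smul (PowerSeries.coeff n) c _
  simp only [hs, map_smul, PowerSeries.coeff_X_pow, smul_ite, smul_eq_mul, smul_zero, mul_ite, mul_one, mul_zero]
  rw [Finset.sum_ite_eq (Finset.range (2 * m + 1)) n]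
  simp only [Finset.mem_range]
  unfold gz
  split_ifs <;> omega

/-- The numerator of the Hilbert series of `K[x₁,…,x₄]/J₃`, written over `(1-t)⁴`, equals
`(1-t)³(1+t-t^{m+3})(1+2t+⋯+2t^m+t^{m+1}+⋯+t^{2m})`. -/
theorem stmt_9' {K : Type*} [Field K] (m : ℕ) (hm : 1 ≤ m) :
    (PowerSeries.mk fun n => (monomialHF (Ideal.span
        ({MvPolynomial.X 2 ^ 2, MvPolynomial.X 3 ^ 2, MvPolynomial.X 1 ^ m * MvPolynomial.X 3,
          MvPolynomial.X 0 ^ (m + 2) * MvPolynomial.X 2, MvPolynomial.X 1 ^ (2 * m + 1)} :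
          Set (MvPolynomial (Fin 4) K))) n : ℤ)) *
      (1 - PowerSeries.X) ^ 4 =
    (1 - PowerSeries.X) ^ 3 * (1 + PowerSeries.X - PowerSeries.X ^ (m + 3)) *
      (∑ k ∈ Finset.range (2 * m + 1),
        (if k = 0 then 1 else if k ≤ m then 2 else (1 : ℤ)) • PowerSeries.X ^ k) := by
  have hH : (PowerSeries.mk fun n => (monomialHF (Ideal.span
        ({MvPolynomial.X 2 ^ 2, MvPolynomial.X 3 ^ 2, MvPolynomial.X 1 ^ m * MvPolynomial.X 3,
          MvPolynomial.X 0 ^ (m + 2) * MvPolynomial.X 2, MvPolynomial.X 1 ^ (2 * m + 1)} :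
          Set (MvPolynomial (Fin 4) K))) n : ℤ)) =
      (PowerSeries.mk fun n => fz m n) * (PowerSeries.mk fun n => gz m n) := by
    ext n
    rw [PowerSeries.coeff_mk, PowerSeries.coeff_mul, HF_eq]
    simp [PowerSeries.coeff_mk]
  rw [hH, ← mk_gz]
  calc (PowerSeries.mk fun n => fz m n) * (PowerSeries.mk fun n => gz m n) *
        (1 - PowerSeries.X) ^ 4
      = ((PowerSeries.mk fun n => fz m n) * (1 - PowerSeries.X)) *
        ((1 - PowerSeries.X) ^ 3 * (PowerSeries.mk fun n => gz m n)) := by ring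
    _ = _ := by rw [mk_fz_mul]; ring

end Stmt9Aux

/-- The numerator of the Hilbert series of `K[x₁,…,x₄]/J₃`, written over `(1-t)⁴`, equals
`(1-t)³(1+t-t^{m+3})(1+2t+⋯+2t^m+t^{m+1}+⋯+t^{2m})`. -/
theorem stmt_9 {K : Type*} [Field K] (m : ℕ) (hm : 1 ≤ m) :
    (PowerSeries.mk fun n => (monomialHF (Ideal.span
        ({MvPolynomial.X 2 ^ 2, MvPolynomial.X 3 ^ 2, MvPolynomial.X 1 ^ m * MvPolynomial.X 3,
          MvPolynomial.X 0 ^ (m + 2) * MvPolynomial.X 2, MvPolynomial.X 1 ^ (2 * m + 1)} :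
          Set (MvPolynomial (Fin 4) K))) n : ℤ)) *
      (1 - PowerSeries.X) ^ 4 =
    (1 - PowerSeries.X) ^ 3 * (1 + PowerSeries.X - PowerSeries.X ^ (m + 3)) *
      (∑ k ∈ Finset.range (2 * m + 1),
        (if k = 0 then 1 else if k ≤ m then 2 else (1 : ℤ)) • PowerSeries.X ^ k) := by
  exact Stmt9Aux.stmt_9' m hm
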